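/- Let R be a commutative ring with an ℕ-grading 𝒜 : ℕ → AddSubmonoid R making R a graded ring, and let 𝔭 be a prime ideal of R that is not homogeneous. Let 𝔭* be the homogenization of 𝔭, i.e., the ideal generated by all homogeneous elements of 𝔭 (equivalently, the homogeneous core Ideal.homogeneousCore 𝒜 𝔭). Then 𝔭* is a prime ideal, 𝔭* is strictly contained in 𝔭, and there is no prime ideal 𝔮 with 𝔭* ⊊ 𝔮 ⊊ 𝔭. Equivalently, the height of 𝔭/𝔭* in R/𝔭* is exactly 1. -/

import Mathlib

open DirectSum

noncomputable section AuxHCP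

open scoped Classical

namespace HCPaux

variable {R : Type*} [CommRing R] (𝒜 : ℕ → AddSubmonoid R) [GradedRing 𝒜]

/-- the `i`-th homogeneous component of `x` -/
def pj (i : ℕ) (x : R) : R := (DirectSum.decompose 𝒜 x i : R)

/-- the support (set of degrees of nonzero homogeneous components) of `x` -/
def sp (x : R) : Finset ℕ := (DirectSum.decompose 𝒜 x).support

lemma pj_mem (i : ℕ) (x : R) : pj 𝒜 i x ∈ 𝒜 i := SetLike.coe_mem _

lemma pj_hom (i : ℕ) (x : R) : SetLike.IsHomogeneousElem 𝒜 (pj 𝒜 i x) := ⟨i, pj_mem 𝒜 i x⟩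

lemma mem_sp {i : ℕ} {x : R} : i ∈ sp 𝒜 x ↔ pj 𝒜 i x ≠ 0 := by
  rw [sp, DFinsupp.mem_support_iff, pj]
  exact (not_congr ZeroMemClass.coe_eq_zero).symm

lemma pj_eq_zero_of_not_mem_sp {i : ℕ} {x : R} (h : i ∉ sp 𝒜 x) : pj 𝒜 i x = 0 := by
  by_contra hne; exact h (mem_sp 𝒜 |>.2 hne)

lemma sum_sp (x : R) : ∑ i ∈ sp 𝒜 x, pj 𝒜 i x = x :=
  DirectSum.sum_support_decompose 𝒜 x

lemma pj_sub (i : ℕ) (x y : R) : pj 𝒜 i (x - y) = pj 𝒜 i x - pj 𝒜 i y :=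
  AddMonoidHom.map_sub (GradedRing.proj 𝒜 i) x y

lemma sp_eq_empty {x : R} (h : x = 0) : sp 𝒜 x = ∅ := by
  subst h; simp [sp]

lemma sp_nonempty {x : R} (h : x ≠ 0) : (sp 𝒜 x).Nonempty := by
  rw [Finset.nonempty_iff_ne_empty]
  intro he
  apply h
  rw [← sum_sp 𝒜 x, he, Finset.sum_empty]

/-- decomposing an explicit sum of homogeneous elements -/
lemma pj_sum {s : Finset ℕ} {g : ℕ → R} (hg : ∀ i ∈ s, g i ∈ 𝒜 i) (j : ℕ) :
    pj 𝒜 j (∑ i ∈ s, g i) = if j ∈ s then g j else 0 := by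
  have : DirectSum.decompose 𝒜 (∑ i ∈ s, g i)
      = ∑ i ∈ s.attach, DirectSum.of (fun i => 𝒜 i) i.1 ⟨g i.1, hg i.1 i.2⟩ := by
    rw [← Finset.sum_attach s g, DirectSum.decompose_sum]
    exact Finset.sum_congr rfl fun i _ => DirectSum.decompose_coe 𝒜 (⟨g i.1, hg i.1 i.2⟩ : 𝒜 i.1)
  rw [pj, this, DFinsupp.finset_sum_apply, AddSubmonoidClass.coe_finset_sum]
  have step : ∀ x ∈ s.attach,
      ((DirectSum.of (fun i => 𝒜 i) x.1 ⟨g x.1, hg x.1 x.2⟩ j : 𝒜 j) : R)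
        = if (x.1 : ℕ) = j then g x.1 else 0 := by
    intro x _
    rcases eq_or_ne (x.1 : ℕ) j with h | h
    · subst h; rw [DirectSum.of_eq_same, if_pos rfl]
    · rw [DirectSum.of_eq_of_ne _ _ _ h.symm, if_neg h, ZeroMemClass.coe_zero]
  rw [Finset.sum_congr rfl step, Finset.sum_attach s (fun i => if i = j then g i else 0),
    Finset.sum_ite_eq' s j (fun i => g i)]


lemma pj_mul (a b : R) (k : ℕ) :
    pj 𝒜 k (a * b) = ∑ ij ∈ ((sp 𝒜 a) ×ˢ (sp 𝒜 b)).filter (fun ij : ℕ × ℕ => ij.1 + ij.2 = k),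
      pj 𝒜 ij.1 a * pj 𝒜 ij.2 b := by
  rw [pj, DirectSum.decompose_mul, DirectSum.coe_mul_apply]
  rfl

lemma pj_mul_eq_of_unique {a b : R} {n m : ℕ}
    (h : ∀ i ∈ sp 𝒜 a, ∀ j ∈ sp 𝒜 b, i + j = n + m → i = n ∧ j = m) :
    pj 𝒜 (n + m) (a * b) = pj 𝒜 n a * pj 𝒜 m b := by
  rw [pj_mul, Finset.sum_filter]
  have step : ∀ ij ∈ (sp 𝒜 a) ×ˢ (sp 𝒜 b),
      (if ij.1 + ij.2 = n + m then pj 𝒜 ij.1 a * pj 𝒜 ij.2 b else 0)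
        = if ij = (n, m) then pj 𝒜 ij.1 a * pj 𝒜 ij.2 b else 0 := by
    rintro ⟨i, j⟩ hij
    rw [Finset.mem_product] at hij
    by_cases hc : i + j = n + m
    · obtain ⟨rfl, rfl⟩ := h i hij.1 j hij.2 hc
      simp
    · rw [if_neg hc, if_neg (by rintro ⟨⟩; exact hc rfl)]
  rw [Finset.sum_congr rfl step, Finset.sum_ite_eq' ((sp 𝒜 a) ×ˢ (sp 𝒜 b)) (n, m)]
  by_cases hmem : (n, m) ∈ (sp 𝒜 a) ×ˢ (sp 𝒜 b)
  · rw [if_pos hmem]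
  · rw [if_neg hmem]
    rw [Finset.mem_product, not_and_or] at hmem
    rcases hmem with h' | h'
    · rw [pj_eq_zero_of_not_mem_sp 𝒜 h', zero_mul]
    · rw [pj_eq_zero_of_not_mem_sp 𝒜 h', mul_zero]

lemma sp_mul_le {a b : R} {n m : ℕ} (ha : ∀ i ∈ sp 𝒜 a, i ≤ n) (hb : ∀ j ∈ sp 𝒜 b, j ≤ m) :
    (∀ k ∈ sp 𝒜 (a * b), k ≤ n + m) ∧ pj 𝒜 (n + m) (a * b) = pj 𝒜 n a * pj 𝒜 m b := by
  constructor
  · intro k hk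
    have hne := (mem_sp 𝒜).1 hk
    rw [pj_mul] at hne
    obtain ⟨ij, hij, -⟩ := Finset.exists_ne_zero_of_sum_ne_zero hne
    rw [Finset.mem_filter, Finset.mem_product] at hij
    have h1 := ha ij.1 hij.1.1
    have h2 := hb ij.2 hij.1.2
    omega
  · exact pj_mul_eq_of_unique 𝒜 fun i hi j hj hsum => by
      have := ha i hi; have := hb j hj; omega

lemma sp_mul_ge {a b : R} {n m : ℕ} (ha : ∀ i ∈ sp 𝒜 a, n ≤ i) (hb : ∀ j ∈ sp 𝒜 b, m ≤ j) :
    (∀ k ∈ sp 𝒜 (a * b), n + m ≤ k) ∧ pj 𝒜 (n + m) (a * b) = pj 𝒜 n a * pj 𝒜 m b := by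
  constructor
  · intro k hk
    have hne := (mem_sp 𝒜).1 hk
    rw [pj_mul] at hne
    obtain ⟨ij, hij, -⟩ := Finset.exists_ne_zero_of_sum_ne_zero hne
    rw [Finset.mem_filter, Finset.mem_product] at hij
    have h1 := ha ij.1 hij.1.1
    have h2 := hb ij.2 hij.1.2
    omega
  · exact pj_mul_eq_of_unique 𝒜 fun i hi j hj hsum => by
      have := ha i hi; have := hb j hj; omega

/-- top degree -/
def td (x : R) : ℕ := WithBot.unbotD 0 ((sp 𝒜 x).max)

/-- bottom degree -/
def bd (x : R) : ℕ := WithTop.untopD 0 ((sp 𝒜 x).min)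

/-- width -/
def w (x : R) : ℕ := td 𝒜 x - bd 𝒜 x

lemma td_eq {x : R} (h : x ≠ 0) : td 𝒜 x = (sp 𝒜 x).max' (sp_nonempty 𝒜 h) := by
  rw [td, ← Finset.coe_max', WithBot.unbotD_coe]

lemma bd_eq {x : R} (h : x ≠ 0) : bd 𝒜 x = (sp 𝒜 x).min' (sp_nonempty 𝒜 h) := by
  rw [bd, ← Finset.coe_min', WithTop.untopD_coe]

lemma td_mem {x : R} (h : x ≠ 0) : td 𝒜 x ∈ sp 𝒜 x := by
  rw [td_eq 𝒜 h]; exact Finset.max'_mem _ _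

lemma bd_mem {x : R} (h : x ≠ 0) : bd 𝒜 x ∈ sp 𝒜 x := by
  rw [bd_eq 𝒜 h]; exact Finset.min'_mem _ _

lemma le_td {x : R} {i : ℕ} (hi : i ∈ sp 𝒜 x) : i ≤ td 𝒜 x := by
  rw [td_eq 𝒜 (fun h0 => by simp [sp_eq_empty 𝒜 h0] at hi)]
  exact Finset.le_max' _ _ hi

lemma bd_le {x : R} {i : ℕ} (hi : i ∈ sp 𝒜 x) : bd 𝒜 x ≤ i := by
  rw [bd_eq 𝒜 (fun h0 => by simp [sp_eq_empty 𝒜 h0] at hi)]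
  exact Finset.min'_le _ _ hi

variable (𝔭 : Ideal R)

/-- all nonzero homogeneous components avoid `𝔭` -/
def Cl (x : R) : Prop := ∀ i, pj 𝒜 i x ≠ 0 → pj 𝒜 i x ∉ 𝔭

lemma strip (x : R) :
    ∃ x' : R, x - x' ∈ (Ideal.homogeneousCore 𝒜 𝔭).toIdeal ∧ Cl 𝒜 𝔭 x' ∧ sp 𝒜 x' ⊆ sp 𝒜 x := by
  set s := (sp 𝒜 x).filter (fun i => pj 𝒜 i x ∉ 𝔭) with hs
  have hsub : s ⊆ sp 𝒜 x := Finset.filter_subset _ _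
  have hpj : ∀ j, pj 𝒜 j (∑ i ∈ s, pj 𝒜 i x) = if j ∈ s then pj 𝒜 j x else 0 :=
    pj_sum 𝒜 (fun i _ => pj_mem 𝒜 i x)
  refine ⟨∑ i ∈ s, pj 𝒜 i x, ?_, ?_, ?_⟩
  · have : x - ∑ i ∈ s, pj 𝒜 i x = ∑ i ∈ sp 𝒜 x \ s, pj 𝒜 i x := by
      rw [sub_eq_iff_eq_add, Finset.sum_sdiff hsub, sum_sp]
    rw [this]
    refine Ideal.sum_mem _ fun i hi => ?_
    rw [Finset.mem_sdiff, hs, Finset.mem_filter, not_and, not_not] at hi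
    exact Ideal.mem_homogeneousCore_of_homogeneous_of_mem (pj_hom 𝒜 i x) (hi.2 hi.1)
  · intro i hne
    rw [hpj i] at hne ⊢
    by_cases hi : i ∈ s
    · rw [if_pos hi]
      rw [hs, Finset.mem_filter] at hi
      exact hi.2
    · rw [if_neg hi] at hne; exact absurd rfl hne
  · intro i hi
    have hne := (mem_sp 𝒜).1 hi
    rw [hpj i] at hne
    by_cases h : i ∈ s
    · exact hsub h
    · rw [if_neg h] at hne; exact absurd rfl hne

lemma cl_not_mem_core {x : R} (hc : Cl 𝒜 𝔭 x) (h0 : x ≠ 0) :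
    x ∉ (Ideal.homogeneousCore 𝒜 𝔭).toIdeal := by
  intro hx
  have h1 : pj 𝒜 (td 𝒜 x) x ≠ 0 := (mem_sp 𝒜).1 (td_mem 𝒜 h0)
  have h2 : pj 𝒜 (td 𝒜 x) x ∈ (Ideal.homogeneousCore 𝒜 𝔭).toIdeal :=
    (Ideal.homogeneousCore 𝒜 𝔭).isHomogeneous _ hx
  exact hc _ h1 (Ideal.toIdeal_homogeneousCore_le 𝒜 𝔭 h2)

lemma cl_w_pos {x : R} (hc : Cl 𝒜 𝔭 x) (h0 : x ≠ 0) (hx : x ∈ 𝔭) : 1 ≤ w 𝒜 x := by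
  have hbt : bd 𝒜 x ≤ td 𝒜 x := bd_le 𝒜 (td_mem 𝒜 h0)
  rcases Nat.lt_or_ge (bd 𝒜 x) (td 𝒜 x) with h | h
  · rw [w]; omega
  · exfalso
    have heq : bd 𝒜 x = td 𝒜 x := le_antisymm hbt h
    have hsing : sp 𝒜 x = {td 𝒜 x} := by
      apply Finset.eq_singleton_iff_unique_mem.2
      exact ⟨td_mem 𝒜 h0, fun i hi => le_antisymm (le_td 𝒜 hi) (heq ▸ bd_le 𝒜 hi)⟩
    have : x = pj 𝒜 (td 𝒜 x) x := by
      conv_lhs => rw [← sum_sp 𝒜 x]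
      rw [hsing, Finset.sum_singleton]
    exact hc _ ((mem_sp 𝒜).1 (td_mem 𝒜 h0)) (this ▸ hx)

lemma sp_of_mem {s : R} {d : ℕ} (hs : s ∈ 𝒜 d) : pj 𝒜 d s = s ∧ ∀ j, j ≠ d → pj 𝒜 j s = 0 := by
  refine ⟨DirectSum.decompose_of_mem_same 𝒜 hs, fun j hj => ?_⟩
  exact DirectSum.decompose_of_mem_ne 𝒜 hs (Ne.symm hj)

lemma sp_bounds_of_mem {s : R} {d : ℕ} (hs : s ∈ 𝒜 d) :
    (∀ i ∈ sp 𝒜 s, i ≤ d) ∧ (∀ i ∈ sp 𝒜 s, d ≤ i) := by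
  constructor <;> intro i hi <;>
  · rcases eq_or_ne i d with h | h
    · omega
    · exact absurd ((sp_of_mem 𝒜 hs).2 i h) ((mem_sp 𝒜).1 hi)

/-- pseudo-division by a minimal-width cleaned element of `𝔭` -/
lemma division (hp : 𝔭.IsPrime)
    {a₀ : R} (ha₀p : a₀ ∈ 𝔭) (ha₀c : Cl 𝒜 𝔭 a₀) (ha₀0 : a₀ ≠ 0)
    (hmin : ∀ z : R, z ∈ 𝔭 → Cl 𝒜 𝔭 z → z ≠ 0 → w 𝒜 a₀ ≤ w 𝒜 z) :
    ∀ x : R, x ∈ 𝔭 → Cl 𝒜 𝔭 x → x ≠ 0 →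
      ∃ (d : ℕ) (s : R), s ∈ 𝒜 d ∧ s ∉ 𝔭 ∧
        ∃ y : R, s * x - y * a₀ ∈ (Ideal.homogeneousCore 𝒜 𝔭).toIdeal := by
  suffices H : ∀ n : ℕ, ∀ x : R, x ∈ 𝔭 → Cl 𝒜 𝔭 x → x ≠ 0 → w 𝒜 x = n →
      ∃ (d : ℕ) (s : R), s ∈ 𝒜 d ∧ s ∉ 𝔭 ∧
        ∃ y : R, s * x - y * a₀ ∈ (Ideal.homogeneousCore 𝒜 𝔭).toIdeal by
    exact fun x h1 h2 h3 => H (w 𝒜 x) x h1 h2 h3 rfl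
  intro n
  induction n using Nat.strong_induction_on with
  | _ n IH =>
  intro x hxp hxc hx0 hwx
  set dm := td 𝒜 a₀ with hdm
  set en := td 𝒜 x with hen
  set s := pj 𝒜 dm a₀ with hsdef
  set t := pj 𝒜 en x with htdef
  have hs0 : s ≠ 0 := (mem_sp 𝒜).1 (td_mem 𝒜 ha₀0)
  have hsnp : s ∉ 𝔭 := ha₀c _ hs0
  have ht0 : t ≠ 0 := (mem_sp 𝒜).1 (td_mem 𝒜 hx0)
  have htnp : t ∉ 𝔭 := hxc _ ht0
  have hsmem : s ∈ 𝒜 dm := pj_mem 𝒜 dm a₀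
  have htmem : t ∈ 𝒜 en := pj_mem 𝒜 en x
  set c := s * x - t * a₀ with hcdef
  have hcp : c ∈ 𝔭 := Ideal.sub_mem _ (Ideal.mul_mem_left _ _ hxp) (Ideal.mul_mem_left _ _ ha₀p)
  -- basic degree inequalities
  have hba : bd 𝒜 a₀ ≤ dm := bd_le 𝒜 (td_mem 𝒜 ha₀0)
  have hbx : bd 𝒜 x ≤ en := bd_le 𝒜 (td_mem 𝒜 hx0)
  have hwa1 : 1 ≤ w 𝒜 a₀ := cl_w_pos 𝒜 𝔭 ha₀c ha₀0 ha₀p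
  have hwax : w 𝒜 a₀ ≤ w 𝒜 x := hmin x hxp hxc hx0
  have hwx1 : 1 ≤ w 𝒜 x := le_trans hwa1 hwax
  have hwa : w 𝒜 a₀ = dm - bd 𝒜 a₀ := rfl
  have hwxe : w 𝒜 x = en - bd 𝒜 x := rfl
  -- support bounds for c
  have hsx_le := sp_mul_le 𝒜 (a := s) (b := x) (sp_bounds_of_mem 𝒜 hsmem).1 (fun j hj => le_td 𝒜 hj)
  have hsx_ge := sp_mul_ge 𝒜 (a := s) (b := x) (sp_bounds_of_mem 𝒜 hsmem).2 (fun j hj => bd_le 𝒜 hj)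
  have hta_le := sp_mul_le 𝒜 (a := t) (b := a₀) (sp_bounds_of_mem 𝒜 htmem).1 (fun j hj => le_td 𝒜 hj)
  have hta_ge := sp_mul_ge 𝒜 (a := t) (b := a₀) (sp_bounds_of_mem 𝒜 htmem).2 (fun j hj => bd_le 𝒜 hj)
  have htop : pj 𝒜 (dm + en) c = 0 := by
    rw [hcdef, pj_sub, hsx_le.2, (sp_of_mem 𝒜 hsmem).1,
      show dm + en = en + dm by omega, hta_le.2, (sp_of_mem 𝒜 htmem).1]
    ring
  have hcsp : ∀ k ∈ sp 𝒜 c, dm + bd 𝒜 x ≤ k ∧ k < dm + en := by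
    intro k hk
    have hkne : pj 𝒜 k c ≠ 0 := (mem_sp 𝒜).1 hk
    have hkor : k ∈ sp 𝒜 (s * x) ∨ k ∈ sp 𝒜 (t * a₀) := by
      by_contra hno
      push_neg at hno
      apply hkne
      rw [hcdef, pj_sub, pj_eq_zero_of_not_mem_sp 𝒜 hno.1, pj_eq_zero_of_not_mem_sp 𝒜 hno.2,
        sub_zero]
    have hkne' : k ≠ dm + en := fun h => hkne (h ▸ htop)
    rcases hkor with h | h
    · have h1 := hsx_le.1 k h
      have h2 := hsx_ge.1 k h
      omega
    · have h1 := hta_le.1 k h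
      have h2 := hta_ge.1 k h
      omega
  obtain ⟨c', hc'K, hc'c, hc'sub⟩ := strip 𝒜 𝔭 c
  by_cases hc'0 : c' = 0
  · refine ⟨dm, s, hsmem, hsnp, t, ?_⟩
    rw [hc'0, sub_zero] at hc'K
    exact hc'K
  · have hc'p : c' ∈ 𝔭 := by
      have : c' = c - (c - c') := by ring
      rw [this]
      exact Ideal.sub_mem _ hcp (Ideal.toIdeal_homogeneousCore_le 𝒜 𝔭 hc'K)
    have hwc' : w 𝒜 c' < n := by
      have h1 := hcsp _ (hc'sub (td_mem 𝒜 hc'0))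
      have h2 := hcsp _ (hc'sub (bd_mem 𝒜 hc'0))
      have : w 𝒜 c' = td 𝒜 c' - bd 𝒜 c' := rfl
      omega
    obtain ⟨d₁, s₁, hs₁m, hs₁p, y₁, hy₁⟩ := IH (w 𝒜 c') hwc' c' hc'p hc'c hc'0 rfl
    refine ⟨d₁ + dm, s₁ * s, SetLike.mul_mem_graded hs₁m hsmem,
      fun hmem => ((hp.mem_or_mem hmem).elim hs₁p hsnp), s₁ * t + y₁, ?_⟩
    have heq : s₁ * s * x - (s₁ * t + y₁) * a₀ = (s₁ * c' - y₁ * a₀) + s₁ * (c - c') := by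
      rw [hcdef]; ring
    rw [heq]
    exact Ideal.add_mem _ hy₁ (Ideal.mul_mem_left _ _ hc'K)

lemma smul_not_mem_core (hp : 𝔭.IsPrime) {s u : R} {d : ℕ} (hs : s ∈ 𝒜 d) (hsp : s ∉ 𝔭)
    (huc : Cl 𝒜 𝔭 u) (hu0 : u ≠ 0) :
    s * u ∉ (Ideal.homogeneousCore 𝒜 𝔭).toIdeal := by
  intro hmem
  have h1 : pj 𝒜 (d + td 𝒜 u) (s * u) ∈ (Ideal.homogeneousCore 𝒜 𝔭).toIdeal :=
    (Ideal.homogeneousCore 𝒜 𝔭).isHomogeneous _ hmem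
  have h2 : pj 𝒜 (d + td 𝒜 u) (s * u) = s * pj 𝒜 (td 𝒜 u) u := by
    rw [(sp_mul_le 𝒜 (sp_bounds_of_mem 𝒜 hs).1 (fun j hj => le_td 𝒜 hj)).2,
      (sp_of_mem 𝒜 hs).1]
  have h3 : s * pj 𝒜 (td 𝒜 u) u ∉ 𝔭 := fun hm =>
    (hp.mem_or_mem hm).elim hsp (huc _ ((mem_sp 𝒜).1 (td_mem 𝒜 hu0)))
  exact h3 (h2 ▸ Ideal.toIdeal_homogeneousCore_le 𝒜 𝔭 h1)

lemma width_id (hp : 𝔭.IsPrime) {d : ℕ} {s u y₀ a₀ : R}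
    (hs : s ∈ 𝒜 d) (hsp : s ∉ 𝔭)
    (huc : Cl 𝒜 𝔭 u) (hu0 : u ≠ 0) (hac : Cl 𝒜 𝔭 a₀) (ha0 : a₀ ≠ 0)
    (hyc : Cl 𝒜 𝔭 y₀) (hy0 : y₀ ≠ 0)
    (h : s * u - y₀ * a₀ ∈ (Ideal.homogeneousCore 𝒜 𝔭).toIdeal) :
    td 𝒜 y₀ + td 𝒜 a₀ = d + td 𝒜 u ∧ bd 𝒜 y₀ + bd 𝒜 a₀ = d + bd 𝒜 u := by
  have hK := Ideal.toIdeal_homogeneousCore_le 𝒜 𝔭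
  have hcong : ∀ j, pj 𝒜 j (s * u) - pj 𝒜 j (y₀ * a₀) ∈ (Ideal.homogeneousCore 𝒜 𝔭).toIdeal :=
    fun j => by
      rw [← pj_sub]
      exact (Ideal.homogeneousCore 𝒜 𝔭).isHomogeneous j h
  have hsu_le := sp_mul_le 𝒜 (sp_bounds_of_mem 𝒜 hs).1 (fun j hj => le_td 𝒜 (x := u) hj)
  have hsu_ge := sp_mul_ge 𝒜 (sp_bounds_of_mem 𝒜 hs).2 (fun j hj => bd_le 𝒜 (x := u) hj)
  have hya_le := sp_mul_le 𝒜 (fun j hj => le_td 𝒜 (x := y₀) hj) (fun j hj => le_td 𝒜 (x := a₀) hj)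
  have hya_ge := sp_mul_ge 𝒜 (fun j hj => bd_le 𝒜 (x := y₀) hj) (fun j hj => bd_le 𝒜 (x := a₀) hj)
  have h1t : pj 𝒜 (d + td 𝒜 u) (s * u) ∉ 𝔭 := by
    rw [hsu_le.2, (sp_of_mem 𝒜 hs).1]
    exact fun hm => (hp.mem_or_mem hm).elim hsp (huc _ ((mem_sp 𝒜).1 (td_mem 𝒜 hu0)))
  have h1b : pj 𝒜 (d + bd 𝒜 u) (s * u) ∉ 𝔭 := by
    rw [hsu_ge.2, (sp_of_mem 𝒜 hs).1]
    exact fun hm => (hp.mem_or_mem hm).elim hsp (huc _ ((mem_sp 𝒜).1 (bd_mem 𝒜 hu0)))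
  have h2t : pj 𝒜 (td 𝒜 y₀ + td 𝒜 a₀) (y₀ * a₀) ∉ 𝔭 := by
    rw [hya_le.2]
    exact fun hm => (hp.mem_or_mem hm).elim
      (hyc _ ((mem_sp 𝒜).1 (td_mem 𝒜 hy0))) (hac _ ((mem_sp 𝒜).1 (td_mem 𝒜 ha0)))
  have h2b : pj 𝒜 (bd 𝒜 y₀ + bd 𝒜 a₀) (y₀ * a₀) ∉ 𝔭 := by
    rw [hya_ge.2]
    exact fun hm => (hp.mem_or_mem hm).elim
      (hyc _ ((mem_sp 𝒜).1 (bd_mem 𝒜 hy0))) (hac _ ((mem_sp 𝒜).1 (bd_mem 𝒜 ha0)))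
  constructor
  · rcases Nat.lt_trichotomy (td 𝒜 y₀ + td 𝒜 a₀) (d + td 𝒜 u) with hlt | heq | hgt
    · exfalso
      apply h1t
      have hz : pj 𝒜 (d + td 𝒜 u) (y₀ * a₀) = 0 :=
        pj_eq_zero_of_not_mem_sp 𝒜 (fun hmem => by have := hya_le.1 _ hmem; omega)
      have := hcong (d + td 𝒜 u)
      rw [hz, sub_zero] at this
      exact hK this
    · exact heq
    · exfalso
      apply h2t
      have hz : pj 𝒜 (td 𝒜 y₀ + td 𝒜 a₀) (s * u) = 0 :=
        pj_eq_zero_of_not_mem_sp 𝒜 (fun hmem => by have := hsu_le.1 _ hmem; omega)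
      have := hcong (td 𝒜 y₀ + td 𝒜 a₀)
      rw [hz, zero_sub, neg_mem_iff] at this
      exact hK this
  · rcases Nat.lt_trichotomy (bd 𝒜 y₀ + bd 𝒜 a₀) (d + bd 𝒜 u) with hlt | heq | hgt
    · exfalso
      apply h2b
      have hz : pj 𝒜 (bd 𝒜 y₀ + bd 𝒜 a₀) (s * u) = 0 :=
        pj_eq_zero_of_not_mem_sp 𝒜 (fun hmem => by have := hsu_ge.1 _ hmem; omega)
      have := hcong (bd 𝒜 y₀ + bd 𝒜 a₀)
      rw [hz, zero_sub, neg_mem_iff] at this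
      exact hK this
    · exact heq
    · exfalso
      apply h1b
      have hz : pj 𝒜 (d + bd 𝒜 u) (y₀ * a₀) = 0 :=
        pj_eq_zero_of_not_mem_sp 𝒜 (fun hmem => by have := hya_ge.1 _ hmem; omega)
      have := hcong (d + bd 𝒜 u)
      rw [hz, sub_zero] at this
      exact hK this

lemma core_step (hp : 𝔭.IsPrime) {𝔮 : Ideal R} (hq : 𝔮.IsPrime) (hqp : 𝔮 ≤ 𝔭)
    (hKq : (Ideal.homogeneousCore 𝒜 𝔭).toIdeal ≤ 𝔮)
    {a₀ : R} (ha₀p : a₀ ∈ 𝔭) (ha₀c : Cl 𝒜 𝔭 a₀) (ha₀0 : a₀ ≠ 0)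
    (hmin : ∀ z : R, z ∈ 𝔭 → Cl 𝒜 𝔭 z → z ≠ 0 → w 𝒜 a₀ ≤ w 𝒜 z) :
    ∀ u : R, u ∈ 𝔮 → Cl 𝒜 𝔭 u → u ≠ 0 → a₀ ∈ 𝔮 := by
  suffices H : ∀ n : ℕ, ∀ u : R, u ∈ 𝔮 → Cl 𝒜 𝔭 u → u ≠ 0 → w 𝒜 u = n → a₀ ∈ 𝔮 by
    exact fun u h1 h2 h3 => H (w 𝒜 u) u h1 h2 h3 rfl
  intro n
  induction n using Nat.strong_induction_on with
  | _ n IH =>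
  intro u huq huc hu0 hwu
  have hup : u ∈ 𝔭 := hqp huq
  obtain ⟨d, s, hsm, hsnp, y, hy⟩ := division 𝒜 𝔭 hp ha₀p ha₀c ha₀0 hmin u hup huc hu0
  have h1 : s * u - y * a₀ ∈ 𝔮 := hKq hy
  have h2 : y * a₀ ∈ 𝔮 := by
    have he : y * a₀ = s * u - (s * u - y * a₀) := by ring
    rw [he]
    exact Ideal.sub_mem _ (Ideal.mul_mem_left _ _ huq) h1
  rcases hq.mem_or_mem h2 with hyq | haq
  · obtain ⟨y₀, hy₀K, hy₀c, -⟩ := strip 𝒜 𝔭 y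
    have hy₀q : y₀ ∈ 𝔮 := by
      have he : y₀ = y - (y - y₀) := by ring
      rw [he]
      exact Ideal.sub_mem _ hyq (hKq hy₀K)
    have hK2 : s * u - y₀ * a₀ ∈ (Ideal.homogeneousCore 𝒜 𝔭).toIdeal := by
      have he : s * u - y₀ * a₀ = (s * u - y * a₀) + (y - y₀) * a₀ := by ring
      rw [he]
      exact Ideal.add_mem _ hy (Ideal.mul_mem_right _ _ hy₀K)
    have hy₀0 : y₀ ≠ 0 := by
      intro h0
      rw [h0, zero_mul, sub_zero] at hK2
      exact smul_not_mem_core 𝒜 𝔭 hp hsm hsnp huc hu0 hK2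
    obtain ⟨e1, e2⟩ := width_id 𝒜 𝔭 hp hsm hsnp huc hu0 ha₀c ha₀0 hy₀c hy₀0 hK2
    have hwy₀ : w 𝒜 y₀ < n := by
      have d1 : w 𝒜 y₀ = td 𝒜 y₀ - bd 𝒜 y₀ := rfl
      have d2 : w 𝒜 u = td 𝒜 u - bd 𝒜 u := rfl
      have d3 : w 𝒜 a₀ = td 𝒜 a₀ - bd 𝒜 a₀ := rfl
      have b1 : bd 𝒜 y₀ ≤ td 𝒜 y₀ := bd_le 𝒜 (td_mem 𝒜 hy₀0)
      have b2 : bd 𝒜 u ≤ td 𝒜 u := bd_le 𝒜 (td_mem 𝒜 hu0)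
      have b3 : bd 𝒜 a₀ ≤ td 𝒜 a₀ := bd_le 𝒜 (td_mem 𝒜 ha₀0)
      have hwa1 : 1 ≤ w 𝒜 a₀ := cl_w_pos 𝒜 𝔭 ha₀c ha₀0 ha₀p
      omega
    exact IH (w 𝒜 y₀) hwy₀ y₀ hy₀q hy₀c hy₀0 rfl
  · exact haq

end HCPaux

theorem homogeneousCore_prime_and_no_intermediate_prime
    {R : Type*} [CommRing R] (𝒜 : ℕ → AddSubmonoid R) [GradedRing 𝒜]
    (𝔭 : Ideal R) (hp : 𝔭.IsPrime) (hns : ¬ 𝔭.IsHomogeneous 𝒜) :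
    (Ideal.homogeneousCore 𝒜 𝔭).toIdeal.IsPrime ∧
      (Ideal.homogeneousCore 𝒜 𝔭).toIdeal < 𝔭 ∧
      ¬ ∃ 𝔮 : Ideal R, 𝔮.IsPrime ∧
          (Ideal.homogeneousCore 𝒜 𝔭).toIdeal < 𝔮 ∧ 𝔮 < 𝔭 := by
  open HCPaux in
  have hKle : (Ideal.homogeneousCore 𝒜 𝔭).toIdeal ≤ 𝔭 := Ideal.toIdeal_homogeneousCore_le 𝒜 𝔭
  have hKlt : (Ideal.homogeneousCore 𝒜 𝔭).toIdeal < 𝔭 :=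
    lt_of_le_of_ne hKle (fun h => hns ((Ideal.IsHomogeneous.iff_eq 𝒜 𝔭).mpr h))
  refine ⟨hp.homogeneousCore, hKlt, ?_⟩
  rintro ⟨𝔮, hq, hKq, hqp⟩
  -- a minimal-width cleaned element of 𝔭
  obtain ⟨z, hzp, hzK⟩ := SetLike.exists_of_lt hKlt
  obtain ⟨z₀, hz₀K, hz₀c, -⟩ := HCPaux.strip 𝒜 𝔭 z
  have hz₀0 : z₀ ≠ 0 := by
    intro h0
    rw [h0, sub_zero] at hz₀K
    exact hzK hz₀K
  have hz₀p : z₀ ∈ 𝔭 := by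
    have he : z₀ = z - (z - z₀) := by ring
    rw [he]
    exact Ideal.sub_mem _ hzp (hKle hz₀K)
  have hSne : (HCPaux.w 𝒜 z₀) ∈ {n | ∃ x : R, x ∈ 𝔭 ∧ HCPaux.Cl 𝒜 𝔭 x ∧ x ≠ 0 ∧ HCPaux.w 𝒜 x = n} :=
    ⟨z₀, hz₀p, hz₀c, hz₀0, rfl⟩
  obtain ⟨a₀, ha₀p, ha₀c, ha₀0, hwa₀⟩ :=
    Nat.sInf_mem (s := {n | ∃ x : R, x ∈ 𝔭 ∧ HCPaux.Cl 𝒜 𝔭 x ∧ x ≠ 0 ∧ HCPaux.w 𝒜 x = n})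
      ⟨_, hSne⟩
  have hmin : ∀ z : R, z ∈ 𝔭 → HCPaux.Cl 𝒜 𝔭 z → z ≠ 0 → HCPaux.w 𝒜 a₀ ≤ HCPaux.w 𝒜 z := by
    intro z h1 h2 h3
    rw [hwa₀]
    exact Nat.sInf_le ⟨z, h1, h2, h3, rfl⟩
  -- a₀ ∈ 𝔮
  obtain ⟨u, huq, huK⟩ := SetLike.exists_of_lt hKq
  obtain ⟨u₀, hu₀K, hu₀c, -⟩ := HCPaux.strip 𝒜 𝔭 u
  have hu₀0 : u₀ ≠ 0 := by
    intro h0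
    rw [h0, sub_zero] at hu₀K
    exact huK hu₀K
  have hu₀q : u₀ ∈ 𝔮 := by
    have he : u₀ = u - (u - u₀) := by ring
    rw [he]
    exact Ideal.sub_mem _ huq (hKq.le hu₀K)
  have ha₀q : a₀ ∈ 𝔮 :=
    HCPaux.core_step 𝒜 𝔭 hp hq hqp.le hKq.le ha₀p ha₀c ha₀0 hmin u₀ hu₀q hu₀c hu₀0
  -- contradiction from b ∈ 𝔭 \ 𝔮
  obtain ⟨b, hbp, hbq⟩ := SetLike.exists_of_lt hqp
  obtain ⟨b₀, hb₀K, hb₀c, -⟩ := HCPaux.strip 𝒜 𝔭 b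
  have hb₀q : b₀ ∉ 𝔮 := by
    intro h0
    apply hbq
    have he : b = (b - b₀) + b₀ := by ring
    rw [he]
    exact Ideal.add_mem _ (hKq.le hb₀K) h0
  have hb₀0 : b₀ ≠ 0 := fun h0 => hb₀q (h0 ▸ 𝔮.zero_mem)
  have hb₀p : b₀ ∈ 𝔭 := by
    have he : b₀ = b - (b - b₀) := by ring
    rw [he]
    exact Ideal.sub_mem _ hbp (hKle hb₀K)
  obtain ⟨d, s, hsm, hsnp, y, hy⟩ :=
    HCPaux.division 𝒜 𝔭 hp ha₀p ha₀c ha₀0 hmin b₀ hb₀p hb₀c hb₀0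
  have hsb : s * b₀ ∈ 𝔮 := by
    have he : s * b₀ = (s * b₀ - y * a₀) + y * a₀ := by ring
    rw [he]
    exact Ideal.add_mem _ (hKq.le hy) (Ideal.mul_mem_left _ _ ha₀q)
  rcases hq.mem_or_mem hsb with h | h
  · exact hsnp (hqp.le h)
  · exact hb₀q h
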